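/- If {λᵢ : 1 ≤ i ≤ n} is a basis for M/N, then {τ^{-1/2} e₁ λᵢ : 1 ≤ i ≤ n} is a basis for M₁/M, where M₁ = ⟨M, e₁⟩ is the basic construction. -/

import Mathlib

/- STATEMENT 5: If {λᵢ : 1 ≤ i ≤ n} is a basis for M/N, then {τ^{-1/2} e₁ λᵢ} is a
basis for M₁/M, where M₁ = ⟨M, e₁⟩ is the basic construction.

A basis for M/N means Σᵢ λᵢ* e₁ λᵢ = 1, and a basis for M₁/M means
Σᵢ vᵢ* e₂ vᵢ = 1, where e₂ is the Jones projection of M ⊆ M₁, satisfying the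
Temperley–Lieb relations e₁e₂e₁ = τe₁ and e₂e₁e₂ = τe₂.  We work in the ambient
algebra A = M₂. -/
theorem stmt5 {A : Type*} [Ring A] [StarRing A] [Algebra ℂ A] [StarModule ℂ A]
    (N M M₁ : StarSubalgebra ℂ A) (hNM : N ≤ M) (hMM₁ : M ≤ M₁)
    (e₁ e₂ : A) (he₁ : e₁ ∈ M₁)
    (he₁proj : e₁ * e₁ = e₁) (he₁star : star e₁ = e₁)
    (he₂proj : e₂ * e₂ = e₂) (he₂star : star e₂ = e₂)
    (τ : ℝ) (hτ : 0 < τ)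
    (hTL1 : e₁ * e₂ * e₁ = (τ : ℂ) • e₁)
    (hTL2 : e₂ * e₁ * e₂ = (τ : ℂ) • e₂)
    (n : ℕ) (l : Fin n → A) (hl : ∀ i, l i ∈ M)
    (hbasis : ∑ i, star (l i) * e₁ * l i = 1) :
    ∑ i, star ((((Real.sqrt τ)⁻¹ : ℝ) : ℂ) • (e₁ * l i)) * e₂ *
        ((((Real.sqrt τ)⁻¹ : ℝ) : ℂ) • (e₁ * l i)) = 1 := by
  have hc : ((((Real.sqrt τ)⁻¹ : ℝ) : ℂ))^2 * (τ : ℂ) = 1 := by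
    have h1 : Real.sqrt τ ≠ 0 := ne_of_gt (Real.sqrt_pos.mpr hτ)
    have : ((Real.sqrt τ)⁻¹ : ℝ)^2 * τ = 1 := by
      rw [← Real.sq_sqrt hτ.le]
      field_simp
      rw [Real.sqrt_sq (Real.sqrt_nonneg τ)]
    calc ((((Real.sqrt τ)⁻¹ : ℝ) : ℂ))^2 * (τ : ℂ)
        = ((((Real.sqrt τ)⁻¹ : ℝ)^2 * τ : ℝ) : ℂ) := by push_cast; ring
      _ = 1 := by rw [this]; norm_num
  set c : ℂ := (((Real.sqrt τ)⁻¹ : ℝ) : ℂ) with hcdef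
  have key : ∀ i, star (c • (e₁ * l i)) * e₂ * (c • (e₁ * l i))
      = (c^2 * (τ:ℂ)) • (star (l i) * e₁ * l i) := by
    intro i
    have hstarc : star c = c := by simp [hcdef]
    rw [star_smul, hstarc, star_mul, he₁star]
    rw [smul_mul_assoc, smul_mul_assoc, mul_smul_comm, smul_smul]
    have : star (l i) * e₁ * e₂ * (e₁ * l i)
        = star (l i) * (e₁ * e₂ * e₁) * l i := by simp [mul_assoc]
    rw [this, hTL1]
    rw [mul_smul_comm, smul_mul_assoc, smul_smul]
    ring_nf
  calc ∑ i, star (c • (e₁ * l i)) * e₂ * (c • (e₁ * l i))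
      = ∑ i, (c^2 * (τ:ℂ)) • (star (l i) * e₁ * l i) := by
        exact Finset.sum_congr rfl fun i _ => key i
    _ = (c^2 * (τ:ℂ)) • ∑ i, star (l i) * e₁ * l i := by rw [Finset.smul_sum]
    _ = 1 := by rw [hbasis, hc, one_smul]
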